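/- Two irrational numbers x and y are in the same orbit of the action of PGL_2(Z) on the irrationals by fractional linear transformations if and only if their continued fraction expansions are tail equivalent. -/

import Mathlib

/-- The continued fraction digits of a real number: `cfDigit 0 x = ⌊x⌋` and
`cfDigit (n+1) x = cfDigit n (1 / fract x)`. For irrational `x` these are the
partial quotients of the unique continued fraction expansion of `x`. -/
noncomputable def cfDigit : ℕ → ℝ → ℤ
  | 0, x => ⌊x⌋
  | n + 1, x => cfDigit n (Int.fract x)⁻¹

/-- Two reals have tail-equivalent continued fraction expansions. -/
def CFTailEquiv (x y : ℝ) : Prop :=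
  ∃ n m : ℕ, 0 < n ∧ 0 < m ∧ ∀ i : ℕ, cfDigit (n + i) x = cfDigit (m + i) y

/-- `x` and `y` are in the same orbit of the action of `PGL₂(ℤ)` by fractional
linear transformations: some integer matrix of determinant `±1` carries `x`
to `y`. -/
def SamePGL2ZOrbit (x y : ℝ) : Prop :=
  ∃ M : Matrix (Fin 2) (Fin 2) ℤ, (M.det = 1 ∨ M.det = -1) ∧
    y = ((M 0 0 : ℝ) * x + (M 0 1 : ℝ)) / ((M 1 0 : ℝ) * x + (M 1 1 : ℝ))

/-! ### Auxiliary machinery -/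

/-- The Gauss-type map `x ↦ (fract x)⁻¹`. -/
noncomputable def cfT (x : ℝ) : ℝ := (Int.fract x)⁻¹

lemma cfDigit_succ (n : ℕ) (x : ℝ) : cfDigit (n + 1) x = cfDigit n (cfT x) := rfl

lemma cfDigit_add (n : ℕ) : ∀ (i : ℕ) (x : ℝ), cfDigit (n + i) x = cfDigit i (cfT^[n] x) := by
  induction n with
  | zero => intro i x; simp
  | succ n ih =>
    intro i x
    have e : n + 1 + i = (n + i) + 1 := by omega
    rw [e, cfDigit_succ, ih, Function.iterate_succ_apply]

lemma Irrational.fract' {x : ℝ} (hx : Irrational x) : Irrational (Int.fract x) := by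
  rw [Int.fract]; exact hx.sub_intCast ⌊x⌋

lemma fract_pos {x : ℝ} (hx : Irrational x) : 0 < Int.fract x :=
  lt_of_le_of_ne (Int.fract_nonneg x) (Ne.symm hx.fract'.ne_zero)

lemma cfT_irrational {x : ℝ} (hx : Irrational x) : Irrational (cfT x) := hx.fract'.inv

lemma one_lt_cfT {x : ℝ} (hx : Irrational x) : 1 < cfT x :=
  one_lt_inv_iff₀.mpr ⟨fract_pos hx, Int.fract_lt_one x⟩

lemma cfT_iter_irrational (n : ℕ) {x : ℝ} (hx : Irrational x) : Irrational (cfT^[n] x) := by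
  induction n with
  | zero => exact hx
  | succ n ih => rw [Function.iterate_succ_apply']; exact cfT_irrational ih

lemma cfT_add_int (x : ℝ) (k : ℤ) : cfT (x + k) = cfT x := by
  rw [cfT, cfT, Int.fract_add_intCast]

lemma tailEquiv_of_iter {x y : ℝ} (n m : ℕ) (hn : 0 < n) (hm : 0 < m)
    (h : cfT^[n] x = cfT^[m] y) : CFTailEquiv x y :=
  ⟨n, m, hn, hm, fun i => by rw [cfDigit_add, cfDigit_add, h]⟩

lemma CFTailEquiv.symm' {x y : ℝ} : CFTailEquiv x y → CFTailEquiv y x := by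
  rintro ⟨n, m, hn, hm, h⟩
  exact ⟨m, n, hm, hn, fun i => (h i).symm⟩

lemma CFTailEquiv.trans' {x y z : ℝ} : CFTailEquiv x y → CFTailEquiv y z → CFTailEquiv x z := by
  rintro ⟨n, m, hn, hm, h⟩ ⟨n', m', hn', hm', h'⟩
  refine ⟨n + n', m' + m, by omega, by omega, fun i => ?_⟩
  have e1 : n + n' + i = n + (n' + i) := by omega
  have e2 : m + (n' + i) = n' + (m + i) := by omega
  have e3 : m' + (m + i) = m' + m + i := by omega
  rw [e1, h, e2, h', e3]

lemma tail_add_int {x : ℝ} (k : ℤ) : CFTailEquiv x (x + k) :=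
  tailEquiv_of_iter 1 1 one_pos one_pos (by
    simp only [Function.iterate_one]
    exact (cfT_add_int x k).symm)

/-- An irrational is tail equivalent to its negative. -/
lemma tail_neg {x : ℝ} (hx : Irrational x) : CFTailEquiv x (-x) := by
  have hf := hx.fract'
  have hf0 := fract_pos hx
  have hf1 := Int.fract_lt_one x
  set f := Int.fract x with hfdef
  have hfrn : Int.fract (-x) = 1 - f := Int.fract_neg hf.ne_zero
  have h1f0 : 0 < 1 - f := by linarith
  have hT1 : cfT (-x) = (1 - f)⁻¹ := by rw [cfT, hfrn]
  have hTx : cfT x = f⁻¹ := rfl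
  have hfhalf : f ≠ 1 / 2 := by
    intro h
    rw [h] at hf
    exact hf ⟨1/2, by norm_num⟩
  rcases lt_or_gt_of_ne hfhalf with hlt | hgt
  · -- f < 1/2 :  cfT^[2] x = cfT^[3] (-x)
    apply tailEquiv_of_iter 2 3 (by norm_num) (by norm_num)
    have hv1 : 1 < (1 - f)⁻¹ := one_lt_inv_iff₀.mpr ⟨h1f0, by linarith⟩
    have hv2 : (1 - f)⁻¹ < 2 := by
      rw [inv_lt_iff_one_lt_mul₀ h1f0]; linarith
    have hfv : Int.fract ((1 - f)⁻¹) = (1 - f)⁻¹ - 1 := by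
      have h1 : Int.fract ((1 - f)⁻¹ - (1:ℤ)) = Int.fract ((1 - f)⁻¹) := Int.fract_sub_intCast _ 1
      have h2 : Int.fract ((1 - f)⁻¹ - (1:ℤ)) = (1 - f)⁻¹ - 1 := by
        push_cast
        exact Int.fract_eq_self.mpr ⟨by linarith, by linarith⟩
      push_cast at h1 h2
      rw [← h1, h2]
    have hstep2 : cfT (cfT (-x)) = (1 - f) / f := by
      rw [hT1, cfT, hfv]
      rw [show (1 - f)⁻¹ - 1 = f / (1 - f) by field_simp; ring]
      rw [inv_div]
    have hstep3 : cfT ((1 - f) / f) = cfT (cfT x) := by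
      have he : (1 - f) / f = f⁻¹ - (1:ℤ) := by push_cast; field_simp
      rw [he, cfT, cfT, Int.fract_sub_intCast, hTx]
    show cfT (cfT x) = cfT (cfT (cfT (-x)))
    rw [hstep2, hstep3]
  · -- f > 1/2 :  cfT^[3] x = cfT^[2] (-x)
    apply tailEquiv_of_iter 3 2 (by norm_num) (by norm_num)
    have hu1 : 1 < f⁻¹ := one_lt_inv_iff₀.mpr ⟨hf0, hf1⟩
    have hu2 : f⁻¹ < 2 := by
      rw [inv_lt_iff_one_lt_mul₀ hf0]; linarith
    have hfu : Int.fract (f⁻¹) = f⁻¹ - 1 := by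
      have h1 : Int.fract (f⁻¹ - (1:ℤ)) = Int.fract (f⁻¹) := Int.fract_sub_intCast _ 1
      have h2 : Int.fract (f⁻¹ - (1:ℤ)) = f⁻¹ - 1 := by
        push_cast
        exact Int.fract_eq_self.mpr ⟨by linarith, by linarith⟩
      push_cast at h1 h2
      rw [← h1, h2]
    have hstep2 : cfT (cfT x) = f / (1 - f) := by
      rw [hTx, cfT, hfu]
      rw [show f⁻¹ - 1 = (1 - f) / f by field_simp]
      rw [inv_div]
    have hkey : cfT (-x) = f / (1 - f) + (1:ℤ) := by
      rw [hT1]; push_cast; field_simp; ring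
    show cfT (cfT (cfT x)) = cfT (cfT (-x))
    rw [hstep2, hkey, cfT_add_int]

lemma tail_inv_gt_one {x : ℝ} (hx : Irrational x) (h1 : 1 < x) : CFTailEquiv x x⁻¹ := by
  apply tailEquiv_of_iter 1 2 one_pos (by norm_num)
  have h0 : (0:ℝ) < x := lt_trans one_pos h1
  have hfr : Int.fract x⁻¹ = x⁻¹ :=
    Int.fract_eq_self.mpr ⟨(inv_pos.mpr h0).le, inv_lt_one_of_one_lt₀ h1⟩
  show cfT x = cfT (cfT x⁻¹)
  rw [show cfT x⁻¹ = x by rw [cfT, hfr, inv_inv]]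

lemma tail_inv {x : ℝ} (hx : Irrational x) : CFTailEquiv x x⁻¹ := by
  rcases lt_trichotomy x 0 with hneg | hz | hpos
  · -- x < 0
    have h1 : CFTailEquiv x (-x) := tail_neg hx
    have hnx : Irrational (-x) := hx.neg
    have h2 : CFTailEquiv (-x) (-x)⁻¹ := by
      rcases lt_trichotomy (-x) 1 with hlt | heq | hgt
      · have := tail_inv_gt_one hnx.inv (one_lt_inv_iff₀.mpr ⟨by linarith, hlt⟩)
        rw [inv_inv] at this
        exact this.symm'
      · exact absurd heq.symm hnx.ne_one.symm
      · exact tail_inv_gt_one hnx hgt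
    have h3 : CFTailEquiv (-x)⁻¹ x⁻¹ := by
      have : CFTailEquiv x⁻¹ (-(x⁻¹)) := tail_neg hx.inv
      rw [show -(x⁻¹) = (-x)⁻¹ by rw [inv_neg]] at this
      exact this.symm'
    exact (h1.trans' h2).trans' h3
  · exact absurd hz hx.ne_zero
  · rcases lt_trichotomy x 1 with hlt | heq | hgt
    · have := tail_inv_gt_one hx.inv (one_lt_inv_iff₀.mpr ⟨hpos, hlt⟩)
      rw [inv_inv] at this
      exact this.symm'
    · exact absurd heq hx.ne_one
    · exact tail_inv_gt_one hx hgt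

/-! ### The key induction (Serret direction `orbit → tail equivalence`) -/

lemma denom_ne_zero {y p q : ℝ} (hy : Irrational y) (he : y = p / q) : q ≠ 0 := by
  intro h0
  rw [h0, div_zero] at he
  exact hy.ne_zero he

lemma key_c0 (a b d : ℤ) (x : ℝ) (hx : Irrational x)
    (hdet : a * d = 1 ∨ a * d = -1) :
    CFTailEquiv x (((a:ℝ) * x + b) / ((0:ℝ) * x + d)) := by
  have ha : a = 1 ∨ a = -1 := by
    rcases hdet with h | h
    · exact Int.isUnit_iff.mp (IsUnit.of_mul_eq_one (a := a) d h)
    · exact Int.isUnit_iff.mp (IsUnit.of_mul_eq_one (a := a) (-d) (by linarith))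
  rcases ha with rfl | rfl
  · rcases hdet with h | h
    · have hd : d = 1 := by omega
      subst hd
      rw [show ((1:ℤ):ℝ) * x + b = x + b by push_cast; ring]
      norm_num
      exact tail_add_int b
    · have hd : d = -1 := by omega
      subst hd
      have he : (((1:ℤ):ℝ) * x + b) / ((0:ℝ) * x + ((-1:ℤ):ℝ)) = -x + ((-b : ℤ):ℝ) := by
        push_cast; field_simp; ring
      rw [he]
      exact (tail_neg hx).trans' (tail_add_int (-b))
  · rcases hdet with h | h
    · have hd : d = -1 := by omega
      subst hd
      have he : (((-1:ℤ):ℝ) * x + b) / ((0:ℝ) * x + ((-1:ℤ):ℝ)) = x + ((-b : ℤ):ℝ) := by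
        push_cast; field_simp; ring
      rw [he]
      exact tail_add_int (-b)
    · have hd : d = 1 := by omega
      subst hd
      have he : (((-1:ℤ):ℝ) * x + b) / ((0:ℝ) * x + ((1:ℤ):ℝ)) = -x + ((b : ℤ):ℝ) := by
        push_cast; field_simp; ring
      rw [he]
      exact (tail_neg hx).trans' (tail_add_int b)

lemma key : ∀ (n : ℕ) (a b c d : ℤ), c.natAbs ≤ n → ∀ x : ℝ, Irrational x →
    (a * d - b * c = 1 ∨ a * d - b * c = -1) →
    Irrational (((a:ℝ) * x + b) / ((c:ℝ) * x + d)) →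
    CFTailEquiv x (((a:ℝ) * x + b) / ((c:ℝ) * x + d)) := by
  intro n
  induction n with
  | zero =>
    intro a b c d hc x hx hdet hy
    have hc0 : c = 0 := by omega
    subst hc0
    simp only [mul_zero, sub_zero] at hdet
    rw [show ((0:ℤ):ℝ) = (0:ℝ) by norm_num]
    exact key_c0 a b d x hx hdet
  | succ n ih =>
    intro a b c d hc x hx hdet hy
    by_cases hc0 : c = 0
    · subst hc0
      simp only [mul_zero, sub_zero] at hdet
      rw [show ((0:ℤ):ℝ) = (0:ℝ) by norm_num]
      exact key_c0 a b d x hx hdet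
    · -- Euclidean step
      set q : ℤ := a / c with hq
      set r : ℤ := a % c with hrdef
      have hqr : c * q + r = a := Int.mul_ediv_add_emod a c
      have hr0 : 0 ≤ r := Int.emod_nonneg a hc0
      have hrc : r < |c| := Int.emod_lt_abs a hc0
      have hrn : r.natAbs ≤ n := by
        have h1 : r.natAbs < c.natAbs := by
          rcases abs_cases c with ⟨h, _⟩ | ⟨h, _⟩ <;> omega
        omega
      set b' : ℤ := b - q * d with hb'
      have hdet' : c * b' - d * r = 1 ∨ c * b' - d * r = -1 := by
        have hrr : r = a - c * q := by omega
        have he : c * b' - d * r = -(a * d - b * c) := by rw [hb', hrr]; ring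
        rcases hdet with h | h
        · right; rw [he, h]
        · left; rw [he, h]; ring
      have hden : (c:ℝ) * x + d ≠ 0 := denom_ne_zero hy rfl
      set E : ℝ := ((a:ℝ) * x + b) / ((c:ℝ) * x + d) with hE
      set z : ℝ := ((c:ℝ) * x + d) / ((r:ℝ) * x + b') with hz
      have hyz : E = (q:ℝ) + ((r:ℝ) * x + (b':ℝ)) / ((c:ℝ) * x + d) := by
        rw [hE]
        have hab : (a:ℝ) = (c:ℝ) * q + r := by exact_mod_cast hqr.symm
        have hbb : (b:ℝ) = (q:ℝ) * d + b' := by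
          have : b = q * d + b' := by rw [hb']; ring
          exact_mod_cast this
        rw [hab, hbb]
        field_simp
        ring
      have hz_inv : z⁻¹ = ((r:ℝ) * x + (b':ℝ)) / ((c:ℝ) * x + d) := by
        rw [hz, inv_div]
      have hz_irr : Irrational z := by
        have h1 : Irrational (E - q) := hy.sub_intCast q
        have h2 : E - q = z⁻¹ := by rw [hyz, hz_inv]; ring
        rw [h2] at h1
        exact h1.of_inv
      have IH := ih c d r b' hrn x hx hdet' hz_irr
      have tfin : CFTailEquiv x (z⁻¹ + (q:ℝ)) :=
        (IH.trans' (tail_inv hz_irr)).trans' (tail_add_int q)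
      have : E = z⁻¹ + (q:ℝ) := by rw [hyz, hz_inv]; ring
      rw [this]
      exact tfin

/-! ### Orbit relation lemmas -/

lemma orbit_mk {x y : ℝ} (a b c d : ℤ) (h : a * d - b * c = 1 ∨ a * d - b * c = -1)
    (he : y = ((a:ℝ) * x + b) / ((c:ℝ) * x + d)) : SamePGL2ZOrbit x y := by
  refine ⟨!![a, b; c, d], ?_, ?_⟩
  · rw [Matrix.det_fin_two_of]; exact h
  · norm_num
    exact he

lemma orbit_elim {x y : ℝ} : SamePGL2ZOrbit x y → ∃ a b c d : ℤ,
    (a * d - b * c = 1 ∨ a * d - b * c = -1) ∧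
    y = ((a:ℝ) * x + b) / ((c:ℝ) * x + d) := by
  rintro ⟨M, h1, h2⟩
  exact ⟨M 0 0, M 0 1, M 1 0, M 1 1, by rw [← Matrix.det_fin_two]; exact h1, h2⟩

lemma orbit_trans {x y z : ℝ} (hy : Irrational y) (hz : Irrational z)
    (h1 : SamePGL2ZOrbit x y) (h2 : SamePGL2ZOrbit y z) : SamePGL2ZOrbit x z := by
  obtain ⟨a, b, c, d, hdet1, he1⟩ := orbit_elim h1
  obtain ⟨e, f, g, h, hdet2, he2⟩ := orbit_elim h2
  have hq1 : (c:ℝ) * x + d ≠ 0 := denom_ne_zero hy he1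
  have hq2 : (g:ℝ) * y + h ≠ 0 := denom_ne_zero hz he2
  apply orbit_mk (e * a + f * c) (e * b + f * d) (g * a + h * c) (g * b + h * d)
  · have hdd : (e * a + f * c) * (g * b + h * d) - (e * b + f * d) * (g * a + h * c)
        = (e * h - f * g) * (a * d - b * c) := by ring
    rcases hdet1 with hA | hA <;> rcases hdet2 with hB | hB <;>
      rw [hdd, hA, hB] <;> norm_num
  · have hB : (g:ℝ) * ((a * x + b) / (c * x + d)) + h ≠ 0 := by
      rw [← he1]; exact hq2
    rw [he2, he1]
    push_cast
    rw [mul_div_assoc', mul_div_assoc', div_add' _ _ _ hq1, div_add' _ _ _ hq1,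
      div_div_div_cancel_right₀ hq1]
    congr 1 <;> ring
  
lemma orbit_symm {x y : ℝ} (hy : Irrational y) (h : SamePGL2ZOrbit x y) :
    SamePGL2ZOrbit y x := by
  obtain ⟨a, b, c, d, hdet, he⟩ := orbit_elim h
  have hq : (c:ℝ) * x + d ≠ 0 := denom_ne_zero hy he
  have hmain : y * ((c:ℝ) * x + d) = (a:ℝ) * x + b := by
    rw [he]; exact div_mul_cancel₀ _ hq
  have hkey : x * ((a:ℝ) - c * y) = (d:ℝ) * y - b := by linear_combination -hmain
  have hne : (a:ℝ) - c * y ≠ 0 := by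
    intro h0
    have hdy : (d:ℝ) * y - b = 0 := by rw [← hkey, h0, mul_zero]
    by_cases hc : c = 0
    · have ha : (a:ℝ) = 0 := by rw [hc] at h0; push_cast at h0; linarith
      have ha' : a = 0 := by exact_mod_cast ha
      rw [ha', hc] at hdet
      simp at hdet
    · have hcy : y = (a:ℝ) / c := by
        have hcne : (c:ℝ) ≠ 0 := Int.cast_ne_zero.mpr hc
        field_simp
        linarith [h0]
      exact hy ⟨(a:ℚ) / (c:ℚ), by push_cast; rw [hcy]⟩
  apply orbit_mk d (-b) (-c) a
  · have : d * a - (-b) * (-c) = a * d - b * c := by ring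
    rw [this]; exact hdet
  · push_cast
    rw [eq_div_iff (by rw [show (-(c:ℝ)) * y + a = (a:ℝ) - c * y by ring]; exact hne)]
    linear_combination hkey

lemma orbit_cfT {x : ℝ} (hx : Irrational x) : SamePGL2ZOrbit x (cfT x) := by
  apply orbit_mk 0 1 1 (-⌊x⌋)
  · right; ring
  · rw [cfT, Int.fract]
    push_cast
    rw [show (0:ℝ) * x + 1 = 1 by ring, show (1:ℝ) * x + -(⌊x⌋:ℝ) = x - ⌊x⌋ by ring, one_div]

lemma orbit_iter {x : ℝ} (hx : Irrational x) (n : ℕ) : SamePGL2ZOrbit x (cfT^[n] x) := by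
  induction n with
  | zero =>
    exact orbit_mk 1 0 0 1 (Or.inl (by ring)) (by push_cast; norm_num)
  | succ n ih =>
    rw [Function.iterate_succ_apply']
    exact orbit_trans (cfT_iter_irrational n hx) (cfT_irrational (cfT_iter_irrational n hx))
      ih (orbit_cfT (cfT_iter_irrational n hx))

/-! ### Uniqueness of continued fractions via Mathlib -/

open GenContFract in
lemma stream_eq : ∀ (n : ℕ) (x : ℝ), Irrational x →
    IntFractPair.stream x n = some ⟨cfDigit n x, Int.fract (cfT^[n] x)⟩ := by
  intro n
  induction n with
  | zero => intro x hx; rfl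
  | succ n ih =>
    intro x hx
    rw [IntFractPair.stream_succ hx.fract'.ne_zero]
    rw [show (Int.fract x)⁻¹ = cfT x from rfl]
    rw [ih _ (cfT_irrational hx)]
    rw [cfDigit_succ, Function.iterate_succ_apply]

lemma of_eq_of_digits {x y : ℝ} (hx : Irrational x) (hy : Irrational y)
    (h : ∀ n, cfDigit n x = cfDigit n y) : GenContFract.of x = GenContFract.of y := by
  ext1
  · rw [GenContFract.of_h_eq_floor, GenContFract.of_h_eq_floor]
    have h0 : ⌊x⌋ = ⌊y⌋ := h 0
    exact_mod_cast h0
  · apply Stream'.Seq.ext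
    intro n
    rw [GenContFract.get?_of_eq_some_of_succ_get?_intFractPair_stream (stream_eq (n+1) x hx),
      GenContFract.get?_of_eq_some_of_succ_get?_intFractPair_stream (stream_eq (n+1) y hy)]
    simp [h (n+1)]

lemma eq_of_digits {x y : ℝ} (hx : Irrational x) (hy : Irrational y)
    (h : ∀ n, cfDigit n x = cfDigit n y) : x = y := by
  have h1 := GenContFract.of_convergence x
  have h2 := GenContFract.of_convergence y
  rw [← of_eq_of_digits hx hy h] at h2
  exact tendsto_nhds_unique h1 h2

/-! ### Main theorem -/

/-- Two irrational numbers are in the same orbit of the action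
of `PGL₂(ℤ)` on the irrationals if and only if their continued fraction
expansions are tail equivalent. -/
theorem pgl2z_orbit_iff_tail_equiv (x y : ℝ) (hx : Irrational x)
    (hy : Irrational y) : SamePGL2ZOrbit x y ↔ CFTailEquiv x y := by
  constructor
  · intro h
    obtain ⟨a, b, c, d, hdet, he⟩ := orbit_elim h
    rw [he]
    exact key c.natAbs a b c d le_rfl x hx hdet (he ▸ hy)
  · rintro ⟨n, m, hn, hm, hdig⟩
    have hxn : Irrational (cfT^[n] x) := cfT_iter_irrational n hx
    have hym : Irrational (cfT^[m] y) := cfT_iter_irrational m hy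
    have heq : cfT^[n] x = cfT^[m] y := by
      apply eq_of_digits hxn hym
      intro i
      rw [← cfDigit_add, ← cfDigit_add, hdig i]
    have o1 : SamePGL2ZOrbit x (cfT^[n] x) := orbit_iter hx n
    have o2 : SamePGL2ZOrbit y (cfT^[m] y) := orbit_iter hy m
    rw [heq] at o1
    exact orbit_trans hym hy o1 (orbit_symm hym o2)
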